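/- Saks–Henstock Lemma for compact lines: let K be a compact line, G : K → ℝ amenable, and f : K → ℝ G-integrable. For every ε > 0 and every ε-gauge δ for f, and for every δ-fine tagged system of intervals S = {([a_k,b_k], t_k) : k = 1,...,m} in K, one has |Σ_{k=1}^m ( f(t_k)(G(b_k) − G(a_k)) + f(a_k)G(a_k) − ∫_{a_k}^{b_k} f dG )| ≤ 2ε. -/
import Mathlib


open Set Filter MeasureTheory

/-- A tagged partition of the interval `[a,b]` in a linear order `K`. -/
structure TaggedPartition (K : Type*) [LinearOrder K] (a b : K) where
  n : ℕ
  x : ℕ → K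
  t : ℕ → K
  x_zero : x 0 = a
  x_last : x n = b
  mono : ∀ i < n, x i ≤ x (i + 1)
  tag_mem : ∀ i < n, t (i + 1) ∈ Set.Icc (x i) (x (i + 1))

/-- A gauge on the interval `[a,b]` of `K`: each point of `[a,b]` is assigned a
relatively open subinterval of `[a,b]` containing it. -/
def IsGauge (K : Type*) [LinearOrder K] [TopologicalSpace K] (a b : K) (δ : K → Set K) : Prop :=
  ∀ x ∈ Set.Icc a b, x ∈ δ x ∧ (δ x).OrdConnected ∧ ∃ U, IsOpen U ∧ δ x = U ∩ Set.Icc a b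

/-- A tagged partition is `δ`-fine when `(x_{i-1}, x_i] ⊆ δ(t_i)` for all `i`. -/
def TaggedPartition.IsFine {K : Type*} [LinearOrder K] {a b : K}
    (P : TaggedPartition K a b) (δ : K → Set K) : Prop :=
  ∀ i < P.n, Set.Ioc (P.x i) (P.x (i + 1)) ⊆ δ (P.t (i + 1))

/-- The Riemann sum `S(f,G,P) = f(a)G(a) + Σ f(t_i)(G(x_i) - G(x_{i-1}))`. -/
noncomputable def riemannSum {K : Type*} [LinearOrder K] {a b : K}
    (f G : K → ℝ) (P : TaggedPartition K a b) : ℝ :=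
  f a * G a + ∑ i ∈ Finset.range P.n, f (P.t (i + 1)) * (G (P.x (i + 1)) - G (P.x i))

/-- `f` has Kurzweil–Stieltjes integral `A` with respect to `G` over `[a,b]`. -/
def HasIntegral {K : Type*} [LinearOrder K] [TopologicalSpace K]
    (f G : K → ℝ) (a b : K) (A : ℝ) : Prop :=
  ∀ ε : ℝ, 0 < ε → ∃ δ : K → Set K, IsGauge K a b δ ∧
    ∀ P : TaggedPartition K a b, P.IsFine δ → |riemannSum f G P - A| < ε

/-- `G` is amenable: right-continuous everywhere, and regulated (left limits exist at
left-dense points, right limits at right-dense points). -/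
def Amenable {K : Type*} [LinearOrder K] [TopologicalSpace K] [BoundedOrder K]
    (G : K → ℝ) : Prop :=
  (∀ x : K, ContinuousWithinAt G (Set.Ici x) x) ∧
  (∀ x : K, x ≠ ⊥ → (¬ ∃ y, y ⋖ x) → ∃ l, Filter.Tendsto G (nhdsWithin x (Set.Iio x)) (nhds l)) ∧
  (∀ x : K, x ≠ ⊤ → (¬ ∃ y, x ⋖ y) → ∃ l, Filter.Tendsto G (nhdsWithin x (Set.Ioi x)) (nhds l))

open Classical in
/-- `L_G(x)`: `0` at the least element, `G` of the immediate predecessor if `x` is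
left-isolated, and the left limit of `G` at `x` if `x` is left-dense. -/
noncomputable def Lfun {K : Type*} [LinearOrder K] [TopologicalSpace K] [BoundedOrder K]
    (G : K → ℝ) (x : K) : ℝ :=
  if x = ⊥ then 0
  else if h : ∃ y, y ⋖ x then G h.choose
  else Function.leftLim G x

/-- The set of variation sums of `G` over divisions of `[a,b]`. -/
def varSums {K : Type*} [LinearOrder K] (G : K → ℝ) (a b : K) : Set ℝ :=
  {v | ∃ (n : ℕ) (x : ℕ → K), x 0 = a ∧ x n = b ∧ (∀ i < n, x i ≤ x (i + 1)) ∧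
        v = ∑ i ∈ Finset.range n, |G (x (i + 1)) - G (x i)|}

/-- `S` is null for the outer measure induced by `μ` via covers by countably many
open intervals. -/
def GNull {K : Type*} [LinearOrder K] [TopologicalSpace K] [MeasurableSpace K]
    (μ : MeasureTheory.Measure K) (S : Set K) : Prop :=
  ∀ ε : ℝ, 0 < ε → ∃ I : ℕ → Set K, (∀ n, IsOpen (I n) ∧ (I n).OrdConnected) ∧
    S ⊆ ⋃ n, I n ∧ ∑' n, μ (I n) < ENNReal.ofReal ε

section SaksHenstockAux

variable {K : Type*} [LinearOrder K]

/-- The trivial tagged partition of `[a,a]`. -/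
def TaggedPartition.refl (a : K) : TaggedPartition K a a where
  n := 0
  x := fun _ => a
  t := fun _ => a
  x_zero := rfl
  x_last := rfl
  mono := fun i hi => absurd hi (Nat.not_lt_zero i)
  tag_mem := fun i hi => absurd hi (Nat.not_lt_zero i)

lemma TaggedPartition.refl_isFine (a : K) (δ : K → Set K) :
    (TaggedPartition.refl a).IsFine δ :=
  fun i hi => absurd hi (Nat.not_lt_zero i)

lemma riemannSum_refl (f G : K → ℝ) (a : K) :
    riemannSum f G (TaggedPartition.refl a) = f a * G a := by
  simp [riemannSum, TaggedPartition.refl]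

/-- The one-interval tagged partition of `[a,b]` with tag `tg`. -/
def TaggedPartition.single (a b tg : K) (h1 : a ≤ tg) (h2 : tg ≤ b) :
    TaggedPartition K a b where
  n := 1
  x := fun i => if i = 0 then a else b
  t := fun _ => tg
  x_zero := rfl
  x_last := rfl
  mono := fun i hi => by
    obtain rfl : i = 0 := Nat.lt_one_iff.mp hi
    exact h1.trans h2
  tag_mem := fun i hi => by
    obtain rfl : i = 0 := Nat.lt_one_iff.mp hi
    exact ⟨h1, h2⟩

lemma TaggedPartition.single_isFine {a b tg : K} {h1 : a ≤ tg} {h2 : tg ≤ b}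
    {δ : K → Set K} (h : Set.Ioc a b ⊆ δ tg) :
    (TaggedPartition.single a b tg h1 h2).IsFine δ := by
  intro i hi
  obtain rfl : i = 0 := Nat.lt_one_iff.mp hi
  exact h

lemma riemannSum_single (f G : K → ℝ) {a b tg : K} (h1 : a ≤ tg) (h2 : tg ≤ b) :
    riemannSum f G (TaggedPartition.single a b tg h1 h2)
      = f a * G a + f tg * (G b - G a) := by
  simp [riemannSum, TaggedPartition.single]

/-- The division-point function of the concatenation of two partitions. -/
def transX {a b c : K} (P : TaggedPartition K a b) (Q : TaggedPartition K b c) (i : ℕ) : K :=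
  if i < P.n then P.x i else Q.x (i - P.n)

/-- The tag function of the concatenation of two partitions. -/
def transT {a b c : K} (P : TaggedPartition K a b) (Q : TaggedPartition K b c) (i : ℕ) : K :=
  if i ≤ P.n then P.t i else Q.t (i - P.n)

lemma transX_left {a b c : K} (P : TaggedPartition K a b) (Q : TaggedPartition K b c)
    {i : ℕ} (h : i ≤ P.n) : transX P Q i = P.x i := by
  rcases lt_or_eq_of_le h with h' | h'
  · exact if_pos h'
  · subst h'
    simp only [transX, if_neg (lt_irrefl P.n), Nat.sub_self, Q.x_zero, P.x_last]

lemma transX_right {a b c : K} (P : TaggedPartition K a b) (Q : TaggedPartition K b c)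
    {i : ℕ} (h : P.n ≤ i) : transX P Q i = Q.x (i - P.n) :=
  if_neg (not_lt.mpr h)

lemma transT_left {a b c : K} (P : TaggedPartition K a b) (Q : TaggedPartition K b c)
    {i : ℕ} (h : i ≤ P.n) : transT P Q i = P.t i :=
  if_pos h

lemma transT_right {a b c : K} (P : TaggedPartition K a b) (Q : TaggedPartition K b c)
    {i : ℕ} (h : P.n < i) : transT P Q i = Q.t (i - P.n) :=
  if_neg (not_le.mpr h)

/-- Concatenation of tagged partitions. -/
def TaggedPartition.trans {a b c : K} (P : TaggedPartition K a b) (Q : TaggedPartition K b c) :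
    TaggedPartition K a c where
  n := P.n + Q.n
  x := transX P Q
  t := transT P Q
  x_zero := by rw [transX_left P Q (Nat.zero_le _), P.x_zero]
  x_last := by
    rw [transX_right P Q (Nat.le_add_right _ _)]
    have e : P.n + Q.n - P.n = Q.n := by omega
    rw [e, Q.x_last]
  mono := by
    intro i hi
    rcases lt_or_ge i P.n with h | h
    · rw [transX_left P Q h.le, transX_left P Q (Nat.succ_le_of_lt h)]
      exact P.mono i h
    · rw [transX_right P Q h, transX_right P Q (h.trans (Nat.le_succ i))]
      have e : i + 1 - P.n = (i - P.n) + 1 := by omega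
      rw [e]
      exact Q.mono (i - P.n) (by omega)
  tag_mem := by
    intro i hi
    rcases lt_or_ge i P.n with h | h
    · rw [transX_left P Q h.le, transX_left P Q (Nat.succ_le_of_lt h),
        transT_left P Q (Nat.succ_le_of_lt h)]
      exact P.tag_mem i h
    · rw [transX_right P Q h, transX_right P Q (h.trans (Nat.le_succ i)),
        transT_right P Q (by omega)]
      have e : i + 1 - P.n = (i - P.n) + 1 := by omega
      rw [e]
      exact Q.tag_mem (i - P.n) (by omega)

lemma TaggedPartition.trans_n {a b c : K} (P : TaggedPartition K a b)
    (Q : TaggedPartition K b c) : (P.trans Q).n = P.n + Q.n := rfl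

lemma TaggedPartition.trans_x {a b c : K} (P : TaggedPartition K a b)
    (Q : TaggedPartition K b c) : (P.trans Q).x = transX P Q := rfl

lemma TaggedPartition.trans_t {a b c : K} (P : TaggedPartition K a b)
    (Q : TaggedPartition K b c) : (P.trans Q).t = transT P Q := rfl

lemma TaggedPartition.trans_isFine {a b c : K} {P : TaggedPartition K a b}
    {Q : TaggedPartition K b c} {δ : K → Set K}
    (hP : P.IsFine δ) (hQ : Q.IsFine δ) : (P.trans Q).IsFine δ := by
  intro i hi
  rw [TaggedPartition.trans_n] at hi
  rw [TaggedPartition.trans_x, TaggedPartition.trans_t]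
  rcases lt_or_ge i P.n with h | h
  · rw [transX_left P Q h.le, transX_left P Q (Nat.succ_le_of_lt h),
      transT_left P Q (Nat.succ_le_of_lt h)]
    exact hP i h
  · rw [transX_right P Q h, transX_right P Q (h.trans (Nat.le_succ i)),
      transT_right P Q (by omega)]
    have e : i + 1 - P.n = (i - P.n) + 1 := by omega
    rw [e]
    exact hQ (i - P.n) (by omega)

lemma riemannSum_trans (f G : K → ℝ) {a b c : K} (P : TaggedPartition K a b)
    (Q : TaggedPartition K b c) :
    riemannSum f G (P.trans Q) = riemannSum f G P + riemannSum f G Q - f b * G b := by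
  unfold riemannSum
  rw [TaggedPartition.trans_n, TaggedPartition.trans_x, TaggedPartition.trans_t,
    Finset.sum_range_add]
  have h1 : ∀ i ∈ Finset.range P.n,
      f (transT P Q (i + 1)) * (G (transX P Q (i + 1)) - G (transX P Q i))
        = f (P.t (i + 1)) * (G (P.x (i + 1)) - G (P.x i)) := by
    intro i hi
    have hi' := Finset.mem_range.mp hi
    rw [transT_left P Q (by omega), transX_left P Q (by omega), transX_left P Q (by omega)]
  have h2 : ∀ i ∈ Finset.range Q.n,
      f (transT P Q (P.n + i + 1)) * (G (transX P Q (P.n + i + 1)) - G (transX P Q (P.n + i)))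
        = f (Q.t (i + 1)) * (G (Q.x (i + 1)) - G (Q.x i)) := by
    intro i hi
    rw [transT_right P Q (by omega), transX_right P Q (by omega),
      transX_right P Q (by omega)]
    have e1 : P.n + i + 1 - P.n = i + 1 := by omega
    have e2 : P.n + i - P.n = i := by omega
    rw [e1, e2]
  rw [Finset.sum_congr rfl h1, Finset.sum_congr rfl h2]
  ring

/-- Cousin's lemma on a compact line. -/
lemma cousin_exists_fine {K : Type*} [LinearOrder K] [TopologicalSpace K] [OrderTopology K]
    [CompactSpace K] {a b : K} (hab : a ≤ b) {δ : K → Set K} (hδ : IsGauge K a b δ) :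
    ∃ P : TaggedPartition K a b, P.IsFine δ := by
  set S : Set K := {x | x ∈ Set.Icc a b ∧ ∃ P : TaggedPartition K a x, P.IsFine δ} with hSdef
  have haS : a ∈ S := ⟨⟨le_rfl, hab⟩, TaggedPartition.refl a, TaggedPartition.refl_isFine a δ⟩
  obtain ⟨c, -, hlub'⟩ :=
    (isClosed_closure (s := S)).isCompact.exists_isLUB ⟨a, subset_closure haS⟩
  have hlub : IsLUB S c := by rwa [IsLUB, upperBounds_closure] at hlub'
  have hca : a ≤ c := hlub.1 haS
  have hcb : c ≤ b := hlub.2 fun x hx => hx.1.2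
  obtain ⟨hcδ, hconn, U, hU, hδc⟩ := hδ c ⟨hca, hcb⟩
  have hUc : U ∈ nhds c := by
    rw [hδc] at hcδ
    exact hU.mem_nhds hcδ.1
  have hcS : c ∈ S := by
    rcases eq_or_lt_of_le hca with h | h
    · exact h ▸ haS
    · obtain ⟨l, hlc, hIoc⟩ := exists_Ioc_subset_of_mem_nhds hUc ⟨a, h⟩
      obtain ⟨y, hyS, hly, hyc⟩ := hlub.exists_between hlc
      rcases eq_or_lt_of_le hyc with h' | h'
      · exact h' ▸ hyS
      · obtain ⟨⟨hay, _⟩, P, hP⟩ := hyS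
        refine ⟨⟨hca, hcb⟩,
          P.trans (TaggedPartition.single y c c h'.le le_rfl),
          TaggedPartition.trans_isFine hP (TaggedPartition.single_isFine ?_)⟩
        intro z hz
        rw [hδc]
        exact ⟨hIoc ⟨hly.trans hz.1, hz.2⟩, hay.trans hz.1.le, hz.2.trans hcb⟩
  rcases eq_or_lt_of_le hcb with heq | hlt
  · subst heq
    obtain ⟨-, P, hP⟩ := hcS
    exact ⟨P, hP⟩
  · exfalso
    obtain ⟨-, P, hP⟩ := hcS
    by_cases hcov : ∃ d, c ⋖ d
    · obtain ⟨d, hcd⟩ := hcov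
      have hdb : d ≤ b := le_of_not_gt fun hbd => hcd.2 hlt hbd
      have hdS : d ∈ S := by
        refine ⟨⟨hca.trans hcd.1.le, hdb⟩,
          P.trans (TaggedPartition.single c d d hcd.1.le le_rfl),
          TaggedPartition.trans_isFine hP (TaggedPartition.single_isFine ?_)⟩
        intro z hz
        have hz' : z = d := le_antisymm hz.2 (not_lt.1 fun h => hcd.2 hz.1 h)
        subst hz'
        exact (hδ z ⟨hca.trans hcd.1.le, hdb⟩).1
      exact absurd (hlub.1 hdS) (not_le.mpr hcd.1)
    · obtain ⟨u, hcu, hIco⟩ := exists_Ico_subset_of_mem_nhds hUc ⟨b, hlt⟩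
      obtain ⟨z, hz⟩ : (Set.Ioo c u).Nonempty := by
        by_contra h
        exact hcov ⟨u, hcu, fun x h1 h2 => h ⟨x, h1, h2⟩⟩
      have hcz' : c < min z b := lt_min hz.1 hlt
      have hS' : min z b ∈ S := by
        refine ⟨⟨hca.trans hcz'.le, min_le_right _ _⟩,
          P.trans (TaggedPartition.single c (min z b) c le_rfl hcz'.le),
          TaggedPartition.trans_isFine hP (TaggedPartition.single_isFine ?_)⟩
        intro w hw
        rw [hδc]
        refine ⟨hIco ⟨hw.1.le, lt_of_le_of_lt (hw.2.trans (min_le_left _ _)) hz.2⟩,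
          hca.trans hw.1.le, hw.2.trans (min_le_right _ _)⟩
      exact absurd (hlub.1 hS') (not_le.mpr hcz')

end SaksHenstockAux

theorem saks_henstock {K : Type*} [LinearOrder K] [TopologicalSpace K] [OrderTopology K]
    [CompactSpace K] [BoundedOrder K] (f G : K → ℝ) (hG : Amenable G)
    (A : ℝ) (hf : HasIntegral f G (⊥ : K) ⊤ A) (ε : ℝ) (hε : 0 < ε)
    (δ : K → Set K) (hδ : IsGauge K ⊥ ⊤ δ)
    (hδε : ∀ P : TaggedPartition K (⊥ : K) (⊤ : K), P.IsFine δ → |riemannSum f G P - A| < ε)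
    (m : ℕ) (a b t : ℕ → K)
    (hmem : ∀ k < m, a k ≤ t k ∧ t k ≤ b k)
    (hord : ∀ k, k + 1 < m → b k ≤ a (k + 1))
    (hfine : ∀ k < m, Set.Ioc (a k) (b k) ⊆ δ (t k))
    (ι : ℕ → ℝ) (hι : ∀ k < m, HasIntegral f G (a k) (b k) (ι k)) :
    |∑ k ∈ Finset.range m, (f (t k) * (G (b k) - G (a k)) + f (a k) * G (a k) - ι k)|
      ≤ 2 * ε := by 
  -- trivial global gauge facts
  have hδ' : ∀ x : K, x ∈ δ x ∧ (δ x).OrdConnected ∧ ∃ U, IsOpen U ∧ δ x = U := by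
    intro x
    obtain ⟨h1, h2, U, hU, hEq⟩ := hδ x ⟨bot_le, le_top⟩
    exact ⟨h1, h2, U, hU, by rw [hEq, Set.Icc_bot_top, Set.inter_univ]⟩
  -- gap partitions: any subinterval admits a δ-fine partition
  have gapFine : ∀ u v : K, u ≤ v → ∃ R : TaggedPartition K u v, R.IsFine δ := by
    intro u v huv
    have hg : IsGauge K u v (fun x => δ x ∩ Set.Icc u v) := by
      intro x hx
      obtain ⟨h1, h2, U, hU, hEq⟩ := hδ' x
      exact ⟨⟨h1, hx⟩, h2.inter Set.ordConnected_Icc, U, hU,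
        by show δ x ∩ Set.Icc u v = U ∩ Set.Icc u v; rw [hEq]⟩
    obtain ⟨R, hR⟩ := cousin_exists_fine huv hg
    exact ⟨R, fun i hi => (hR i hi).trans Set.inter_subset_left⟩
  refine le_of_forall_pos_le_add ?_
  intro η hη
  -- choose fine partitions of the intervals [a k, b k] with good Riemann sums
  have hPin : ∀ k, k < m → ∃ P : TaggedPartition K (a k) (b k),
      P.IsFine δ ∧ |riemannSum f G P - ι k| < η / (m + 1) := by
    intro k hk
    obtain ⟨δk, hδk, hδkε⟩ := hι k hk (η / (m + 1)) (by positivity)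
    have hg : IsGauge K (a k) (b k) (fun x => δ x ∩ δk x) := by
      intro x hx
      obtain ⟨h1, h2, U, hU, hEq⟩ := hδ' x
      obtain ⟨h1', h2', V, hV, hEq'⟩ := hδk x hx
      exact ⟨⟨h1, h1'⟩, h2.inter h2', U ∩ V, hU.inter hV,
        by show δ x ∩ δk x = U ∩ V ∩ Set.Icc (a k) (b k); rw [hEq, hEq', Set.inter_assoc]⟩
    have hab : a k ≤ b k := (hmem k hk).1.trans (hmem k hk).2
    obtain ⟨P, hP⟩ := cousin_exists_fine hab hg
    exact ⟨P, fun i hi => (hP i hi).trans Set.inter_subset_left,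
      hδkε P fun i hi => (hP i hi).trans Set.inter_subset_right⟩
  choose Pin hPin1 hPin2 using hPin
  set s : ℕ → ℝ := fun k => if h : k < m then riemannSum f G (Pin k h) else ι k with hs_def
  -- main induction: concatenate partitions up to b (k-1)
  have key : ∀ k, k ≤ m → ∃ P Q : TaggedPartition K (⊥ : K) (Nat.casesOn k ⊥ b : K),
      P.IsFine δ ∧ Q.IsFine δ ∧
      riemannSum f G P - riemannSum f G Q
        = ∑ j ∈ Finset.range k,
            (f (t j) * (G (b j) - G (a j)) + f (a j) * G (a j) - s j) := by
    intro k
    induction k with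
    | zero =>
      intro _
      exact ⟨TaggedPartition.refl ⊥, TaggedPartition.refl ⊥,
        TaggedPartition.refl_isFine _ _, TaggedPartition.refl_isFine _ _, by simp⟩
    | succ k ih =>
      intro hk
      have hk' : k < m := Nat.lt_of_succ_le hk
      obtain ⟨P, Q, hPf, hQf, hPQ⟩ := ih hk'.le
      have hca : (Nat.casesOn k ⊥ b : K) ≤ a k := by
        cases k with
        | zero => exact bot_le
        | succ j => exact hord j (by omega)
      obtain ⟨R, hRf⟩ := gapFine _ (a k) hca
      have hab1 : a k ≤ t k := (hmem k hk').1
      have hab2 : t k ≤ b k := (hmem k hk').2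
      refine ⟨(P.trans R).trans (TaggedPartition.single (a k) (b k) (t k) hab1 hab2),
        (Q.trans R).trans (Pin k hk'),
        TaggedPartition.trans_isFine (TaggedPartition.trans_isFine hPf hRf)
          (TaggedPartition.single_isFine (hfine k hk')),
        TaggedPartition.trans_isFine (TaggedPartition.trans_isFine hQf hRf) (hPin1 k hk'),
        ?_⟩
      have hsk : s k = riemannSum f G (Pin k hk') := by
        rw [hs_def]
        exact dif_pos hk'
      rw [riemannSum_trans, riemannSum_trans, riemannSum_trans, riemannSum_trans,
        riemannSum_single, Finset.sum_range_succ, ← hPQ, hsk]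
      ring
  obtain ⟨P, Q, hPf, hQf, hPQ⟩ := key m le_rfl
  obtain ⟨R, hRf⟩ := gapFine (Nat.casesOn m ⊥ b) ⊤ le_top
  have h1 : |riemannSum f G (P.trans R) - A| < ε :=
    hδε _ (TaggedPartition.trans_isFine hPf hRf)
  have h2 : |riemannSum f G (Q.trans R) - A| < ε :=
    hδε _ (TaggedPartition.trans_isFine hQf hRf)
  have hdiff : |∑ j ∈ Finset.range m,
      (f (t j) * (G (b j) - G (a j)) + f (a j) * G (a j) - s j)| < 2 * ε := by
    rw [← hPQ]
    have hrw : riemannSum f G P - riemannSum f G Q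
        = (riemannSum f G (P.trans R) - A) - (riemannSum f G (Q.trans R) - A) := by
      rw [riemannSum_trans, riemannSum_trans]
      ring
    rw [hrw]
    calc |(riemannSum f G (P.trans R) - A) - (riemannSum f G (Q.trans R) - A)|
        ≤ |riemannSum f G (P.trans R) - A| + |riemannSum f G (Q.trans R) - A| :=
          abs_sub _ _
      _ < 2 * ε := by linarith
  have hsplit : ∀ j ∈ Finset.range m,
      f (t j) * (G (b j) - G (a j)) + f (a j) * G (a j) - ι j
        = (f (t j) * (G (b j) - G (a j)) + f (a j) * G (a j) - s j) + (s j - ι j) :=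
    fun j _ => by ring
  rw [Finset.sum_congr rfl hsplit, Finset.sum_add_distrib]
  have herr : |∑ j ∈ Finset.range m, (s j - ι j)| ≤ η := by
    calc |∑ j ∈ Finset.range m, (s j - ι j)|
        ≤ ∑ j ∈ Finset.range m, |s j - ι j| := Finset.abs_sum_le_sum_abs _ _
      _ ≤ ∑ _j ∈ Finset.range m, η / (m + 1) := by
          refine Finset.sum_le_sum ?_
          intro j hj
          have hj' := Finset.mem_range.mp hj
          have : s j = riemannSum f G (Pin j hj') := by
            rw [hs_def]
            exact dif_pos hj'
          rw [this]
          exact (hPin2 j hj').le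
      _ = m * (η / (m + 1)) := by
          rw [Finset.sum_const, Finset.card_range, nsmul_eq_mul]
      _ ≤ η := by
          rw [mul_div_assoc']
          rw [div_le_iff₀ (by positivity)]
          nlinarith [hη.le, Nat.cast_nonneg (α := ℝ) m]
  calc |∑ j ∈ Finset.range m,
          (f (t j) * (G (b j) - G (a j)) + f (a j) * G (a j) - s j)
        + ∑ j ∈ Finset.range m, (s j - ι j)|
      ≤ |∑ j ∈ Finset.range m,
          (f (t j) * (G (b j) - G (a j)) + f (a j) * G (a j) - s j)|
        + |∑ j ∈ Finset.range m, (s j - ι j)| := abs_add_le _ _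
    _ ≤ 2 * ε + η := by linarith
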